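/- Consider the noise-free discrete-time LTI system x(k+1) = A x(k) + B u(k), y(k) = C x(k). Fix h ≥ 1, t ≥ 1, a start time k, and set s = h·n + (h+t)·p, so that the matrix L[y,u] obtained by stacking the block Hankel matrix H_y(k;h;s) on top of the block Hankel matrix H_u(k;h+t;s) is a square s×s matrix. Suppose the extended observability matrix O_c(h) has rank m and that L[y,u] is invertible. Then the extended Markov parameter matrix satisfies G(t) = 𝖸(k+h+t;s) · L[y,u]⁻¹ · [0; I_{tp}], where [0; I_{tp}] is the s×(tp) matrix whose top (s−tp) rows are zero and whose bottom tp rows form the identity, i.e., G(t) consists of the last tp columns of 𝖸(k+h+t;s)·L[y,u]⁻¹. -/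

import Mathlib

open Matrix

lemma exists_left_inverse_of_rank {α β : Type*} [Fintype α] [Fintype β]
    [DecidableEq α] [DecidableEq β] (M : Matrix α β ℝ)
    (hr : M.rank = Fintype.card β) : ∃ P : Matrix β α ℝ, P * M = 1 := by
  have hker : LinearMap.ker M.mulVecLin = ⊥ := by
    have h1 := LinearMap.finrank_range_add_finrank_ker M.mulVecLin
    rw [Module.finrank_pi] at h1
    have hr' : Module.finrank ℝ (LinearMap.range M.mulVecLin) = Fintype.card β := hr
    have h2 : Module.finrank ℝ (LinearMap.ker M.mulVecLin) = 0 := by omega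
    exact Submodule.finrank_eq_zero.mp h2
  obtain ⟨g, hg⟩ := LinearMap.exists_leftInverse_of_injective M.mulVecLin hker
  refine ⟨LinearMap.toMatrix' g, ?_⟩
  have h3 : LinearMap.toMatrix' (g ∘ₗ M.mulVecLin) =
      LinearMap.toMatrix' g * LinearMap.toMatrix' M.mulVecLin :=
    LinearMap.toMatrix'_comp g M.mulVecLin
  rw [hg, LinearMap.toMatrix'_id, ← Matrix.toLin'_apply', LinearMap.toMatrix'_toLin'] at h3
  exact h3.symm

lemma state_formula {m p : ℕ} (A : Matrix (Fin m) (Fin m) ℝ) (B : Matrix (Fin m) (Fin p) ℝ)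
    (x : ℕ → Fin m → ℝ) (u : ℕ → Fin p → ℝ)
    (hx : ∀ j, x (j + 1) = A.mulVec (x j) + B.mulVec (u j)) (j : ℕ) :
    ∀ d : ℕ, x (j + d) = (A ^ d).mulVec (x j)
      + ∑ l ∈ Finset.range d, ((A ^ (d - 1 - l)) * B).mulVec (u (j + l)) := by
  intro d
  induction d with
  | zero => simp
  | succ d ih =>
    have e : j + (d + 1) = (j + d) + 1 := by omega
    rw [e, hx, ih, Matrix.mulVec_add, Matrix.mulVec_mulVec]
    have hs : A.mulVec (∑ l ∈ Finset.range d, ((A ^ (d - 1 - l)) * B).mulVec (u (j + l)))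
        = ∑ l ∈ Finset.range d, ((A ^ (d - l)) * B).mulVec (u (j + l)) := by
      have := map_sum A.mulVecLin
        (fun l => ((A ^ (d - 1 - l)) * B).mulVec (u (j + l))) (Finset.range d)
      simp only [Matrix.mulVecLin_apply] at this
      rw [this]
      refine Finset.sum_congr rfl fun l hl => ?_
      rw [Finset.mem_range] at hl
      rw [Matrix.mulVec_mulVec, ← Matrix.mul_assoc, ← pow_succ']
      have e4 : d - 1 - l + 1 = d - l := by omega
      rw [e4]
    rw [hs, Finset.sum_range_succ]
    have e2 : d + 1 - 1 - d = 0 := by omega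
    have e3 : ∀ l, d + 1 - 1 - l = d - l := fun l => by omega
    simp only [e2, e3, pow_zero, Matrix.one_mul, ← pow_succ']
    abel

lemma sum_fin_ite {N i : ℕ} (hi : i ≤ N) (f : ℕ → ℝ) :
    ∑ l : Fin N, (if (l : ℕ) < i then f (l : ℕ) else 0) = ∑ l ∈ Finset.range i, f l := by
  rw [Fin.sum_univ_eq_sum_range (fun l => if l < i then f l else 0) N]
  rw [← Finset.sum_subset (Finset.range_subset_range.mpr hi)
    (fun l _ hl => if_neg (by simpa using hl))]
  exact Finset.sum_congr rfl fun l hl => if_pos (Finset.mem_range.mp hl)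

theorem markov_parameter_identification
    (m n p : ℕ) (h t k : ℕ) (hh : 1 ≤ h) (ht : 1 ≤ t)
    (A : Matrix (Fin m) (Fin m) ℝ) (B : Matrix (Fin m) (Fin p) ℝ)
    (C : Matrix (Fin n) (Fin m) ℝ)
    (x : ℕ → Fin m → ℝ) (u : ℕ → Fin p → ℝ) (y : ℕ → Fin n → ℝ)
    (hx : ∀ j, x (j + 1) = A.mulVec (x j) + B.mulVec (u j))
    (hy : ∀ j, y j = C.mulVec (x j))
    (hrank : (Matrix.of fun (ia : Fin h × Fin n) (b : Fin m) =>
        (C * A ^ (ia.1 : ℕ)) ia.2 b : Matrix (Fin h × Fin n) (Fin m) ℝ).rank = m)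
    (L : Matrix ((Fin h × Fin n) ⊕ (Fin (h + t) × Fin p))
          (Fin (h * n + (h + t) * p)) ℝ)
    (hLy : ∀ (ia : Fin h × Fin n) (j : Fin (h * n + (h + t) * p)),
        L (Sum.inl ia) j = y (k + (ia.1 : ℕ) + (j : ℕ)) ia.2)
    (hLu : ∀ (ib : Fin (h + t) × Fin p) (j : Fin (h * n + (h + t) * p)),
        L (Sum.inr ib) j = u (k + (ib.1 : ℕ) + (j : ℕ)) ib.2)
    (Linv : Matrix (Fin (h * n + (h + t) * p))
          ((Fin h × Fin n) ⊕ (Fin (h + t) × Fin p)) ℝ)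
    (hLinv₁ : L * Linv = 1) (hLinv₂ : Linv * L = 1) :
    (Matrix.of fun (a : Fin n) (jb : Fin t × Fin p) =>
        (C * A ^ (t - 1 - (jb.1 : ℕ)) * B) a jb.2) =
      (Matrix.of fun (a : Fin n) (j : Fin (h * n + (h + t) * p)) =>
          y (k + h + t + (j : ℕ)) a) * Linv *
      (Matrix.of fun (r : (Fin h × Fin n) ⊕ (Fin (h + t) × Fin p))
          (jb : Fin t × Fin p) =>
        match r with
        | Sum.inl _ => 0
        | Sum.inr ib =>
            if (ib.1 : ℕ) = h + (jb.1 : ℕ) ∧ ib.2 = jb.2 then (1 : ℝ) else 0) := by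
  have hyv : ∀ j d : ℕ, y (j + d) = (C * A ^ d).mulVec (x j)
      + ∑ l ∈ Finset.range d, (C * A ^ (d - 1 - l) * B).mulVec (u (j + l)) := by
    intro j d
    rw [hy, state_formula A B x u hx j d, Matrix.mulVec_add, Matrix.mulVec_mulVec]
    congr 1
    have := map_sum C.mulVecLin
      (fun l => ((A ^ (d - 1 - l)) * B).mulVec (u (j + l))) (Finset.range d)
    simp only [Matrix.mulVecLin_apply] at this
    rw [this]
    exact Finset.sum_congr rfl fun l _ => by rw [Matrix.mulVec_mulVec, ← Matrix.mul_assoc]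
  set O : Matrix (Fin h × Fin n) (Fin m) ℝ :=
    Matrix.of fun ia b => (C * A ^ (ia.1 : ℕ)) ia.2 b with hOdef
  obtain ⟨P, hPO⟩ := exists_left_inverse_of_rank O (by rw [hrank, Fintype.card_fin])
  set X : Matrix (Fin m) (Fin (h * n + (h + t) * p)) ℝ :=
    Matrix.of fun c j => x (k + (j : ℕ)) c with hXdef
  set U : Matrix (Fin (h + t) × Fin p) (Fin (h * n + (h + t) * p)) ℝ :=
    Matrix.of fun lb j => u (k + (lb.1 : ℕ) + (j : ℕ)) lb.2 with hUdef
  set Yh : Matrix (Fin h × Fin n) (Fin (h * n + (h + t) * p)) ℝ :=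
    Matrix.of fun ia j => y (k + (ia.1 : ℕ) + (j : ℕ)) ia.2 with hYhdef
  set T : Matrix (Fin h × Fin n) (Fin (h + t) × Fin p) ℝ :=
    Matrix.of fun ia lb => if (lb.1 : ℕ) < (ia.1 : ℕ) then
      (C * A ^ ((ia.1 : ℕ) - 1 - (lb.1 : ℕ)) * B) ia.2 lb.2 else 0 with hTdef
  set Gr : Matrix (Fin n) (Fin (h + t) × Fin p) ℝ :=
    Matrix.of fun a lb => (C * A ^ (h + t - 1 - (lb.1 : ℕ)) * B) a lb.2 with hGrdef
  set E₂ : Matrix (Fin (h + t) × Fin p) (Fin t × Fin p) ℝ :=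
    Matrix.of fun lb jb =>
      if (lb.1 : ℕ) = h + (jb.1 : ℕ) ∧ lb.2 = jb.2 then (1 : ℝ) else 0 with hE₂def
  set Ot : Matrix (Fin n) (Fin m) ℝ := C * A ^ (h + t) with hOtdef
  -- block structure of L
  have FL : L = Matrix.fromRows Yh U := by
    ext r j
    cases r with
    | inl ia => simp [Matrix.fromRows_apply_inl, hLy, hYhdef]
    | inr ib => simp [Matrix.fromRows_apply_inr, hLu, hUdef]
  -- Yh = O * X + T * U
  have F1 : Yh = O * X + T * U := by
    ext ⟨i, a⟩ j
    have e : k + (i : ℕ) + (j : ℕ) = (k + (j : ℕ)) + (i : ℕ) := by omega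
    have h1 : (O * X) (i, a) j = ((C * A ^ (i : ℕ)).mulVec (x (k + (j : ℕ)))) a := by
      simp [Matrix.mul_apply, Matrix.mulVec, dotProduct, hOdef, hXdef]
    have h2 : (T * U) (i, a) j = ∑ l ∈ Finset.range (i : ℕ),
        ((C * A ^ ((i : ℕ) - 1 - l) * B).mulVec (u ((k + (j : ℕ)) + l))) a := by
      rw [Matrix.mul_apply, Fintype.sum_prod_type]
      have inner : ∀ l : Fin (h + t), (∑ b, T (i, a) (l, b) * U (l, b) j)
          = if (l : ℕ) < (i : ℕ) then
              ((C * A ^ ((i : ℕ) - 1 - (l : ℕ)) * B).mulVec (u ((k + (j : ℕ)) + (l : ℕ)))) a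
            else 0 := by
        intro l
        by_cases hl : (l : ℕ) < (i : ℕ)
        · rw [if_pos hl]
          have e2 : k + (l : ℕ) + (j : ℕ) = (k + (j : ℕ)) + (l : ℕ) := by omega
          simp [hTdef, hUdef, hl, Matrix.mulVec, dotProduct, e2]
        · rw [if_neg hl]
          simp [hTdef, hUdef, hl]
      rw [Finset.sum_congr rfl (fun l _ => inner l)]
      have hile : (i : ℕ) ≤ h + t := by have := i.isLt; omega
      exact sum_fin_ite hile
        (fun l => ((C * A ^ ((i : ℕ) - 1 - l) * B).mulVec (u ((k + (j : ℕ)) + l))) a)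
    show y (k + (i : ℕ) + (j : ℕ)) a = _
    rw [Matrix.add_apply, h1, h2, e, hyv (k + (j : ℕ)) (i : ℕ)]
    simp [Finset.sum_apply]
  -- Yr = Ot * X + Gr * U
  have F2 : (Matrix.of fun (a : Fin n) (j : Fin (h * n + (h + t) * p)) =>
      y (k + h + t + (j : ℕ)) a) = Ot * X + Gr * U := by
    ext a j
    have e : k + h + t + (j : ℕ) = (k + (j : ℕ)) + (h + t) := by omega
    have h1 : (Ot * X) a j = ((C * A ^ (h + t)).mulVec (x (k + (j : ℕ)))) a := by
      simp [Matrix.mul_apply, Matrix.mulVec, dotProduct, hOtdef, hXdef]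
    have h2 : (Gr * U) a j = ∑ l ∈ Finset.range (h + t),
        ((C * A ^ (h + t - 1 - l) * B).mulVec (u ((k + (j : ℕ)) + l))) a := by
      rw [Matrix.mul_apply, Fintype.sum_prod_type]
      have inner : ∀ l : Fin (h + t), (∑ b, Gr a (l, b) * U (l, b) j)
          = ((C * A ^ (h + t - 1 - (l : ℕ)) * B).mulVec (u ((k + (j : ℕ)) + (l : ℕ)))) a := by
        intro l
        have e2 : k + (l : ℕ) + (j : ℕ) = (k + (j : ℕ)) + (l : ℕ) := by omega
        simp [hGrdef, hUdef, Matrix.mulVec, dotProduct, e2]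
      rw [Finset.sum_congr rfl (fun l _ => inner l)]
      exact Fin.sum_univ_eq_sum_range
        (fun l => ((C * A ^ (h + t - 1 - l) * B).mulVec (u ((k + (j : ℕ)) + l))) a) (h + t)
    show y (k + h + t + (j : ℕ)) a = _
    rw [Matrix.add_apply, h1, h2, e, hyv (k + (j : ℕ)) (h + t)]
    simp [Finset.sum_apply]
  -- T * E₂ = 0
  have hTE : T * E₂ = 0 := by
    ext ⟨i, a⟩ ⟨j', b'⟩
    rw [Matrix.mul_apply, Matrix.zero_apply]
    apply Finset.sum_eq_zero
    rintro ⟨l, b⟩ -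
    by_cases h1 : (l : ℕ) < (i : ℕ)
    · by_cases h2 : (l : ℕ) = h + (j' : ℕ) ∧ b = b'
      · exfalso; have := i.isLt; omega
      · simp [hTdef, hE₂def, h1, h2]
    · simp [hTdef, hE₂def, h1]
  -- Gr * E₂ = G
  have hGE : Gr * E₂ = (Matrix.of fun (a : Fin n) (jb : Fin t × Fin p) =>
      (C * A ^ (t - 1 - (jb.1 : ℕ)) * B) a jb.2) := by
    ext a ⟨j', b'⟩
    rw [Matrix.mul_apply]
    have hj' : h + (j' : ℕ) < h + t := by have := j'.isLt; omega
    have hsum := Finset.sum_eq_single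
      (f := fun lb : Fin (h + t) × Fin p => Gr a lb * E₂ lb (j', b'))
      (⟨⟨h + (j' : ℕ), hj'⟩, b'⟩ : Fin (h + t) × Fin p)
      (fun lb _ hne => by
        have hc : ¬((lb.1 : ℕ) = h + (j' : ℕ) ∧ lb.2 = b') := by
          rintro ⟨ha, hb⟩
          exact hne (Prod.ext (Fin.ext ha) hb)
        simp [hE₂def, hc])
      (fun habs => absurd (Finset.mem_univ _) habs)
    rw [hsum]
    have e : h + t - 1 - (h + (j' : ℕ)) = t - 1 - (j' : ℕ) := by have := j'.isLt; omega
    simp [hGrdef, hE₂def, e]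
  -- E = fromRows 0 E₂
  have FE : (Matrix.of fun (r : (Fin h × Fin n) ⊕ (Fin (h + t) × Fin p))
      (jb : Fin t × Fin p) =>
        match r with
        | Sum.inl _ => 0
        | Sum.inr ib =>
            if (ib.1 : ℕ) = h + (jb.1 : ℕ) ∧ ib.2 = jb.2 then (1 : ℝ) else 0)
      = Matrix.fromRows (0 : Matrix (Fin h × Fin n) (Fin t × Fin p) ℝ) E₂ := by
    ext r jb
    cases r with
    | inl ia => simp [Matrix.fromRows_apply_inl]
    | inr ib => simp [Matrix.fromRows_apply_inr, hE₂def]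
  set M : Matrix (Fin n) ((Fin h × Fin n) ⊕ (Fin (h + t) × Fin p)) ℝ :=
    Matrix.fromCols (Ot * P) (Gr - Ot * P * T) with hMdef
  have hML : M * L = (Matrix.of fun (a : Fin n) (j : Fin (h * n + (h + t) * p)) =>
      y (k + h + t + (j : ℕ)) a) := by
    rw [hMdef, FL, Matrix.fromCols_mul_fromRows, F1, F2]
    rw [Matrix.mul_add, Matrix.sub_mul]
    have e1 : Ot * P * (O * X) = Ot * X := by
      rw [← Matrix.mul_assoc, Matrix.mul_assoc Ot P O, hPO, Matrix.mul_one]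
    have e2 : Ot * P * (T * U) = Ot * P * T * U := (Matrix.mul_assoc (Ot * P) T U).symm
    rw [e1, e2]
    abel
  have hME : M * Matrix.fromRows (0 : Matrix (Fin h × Fin n) (Fin t × Fin p) ℝ) E₂
      = (Matrix.of fun (a : Fin n) (jb : Fin t × Fin p) =>
          (C * A ^ (t - 1 - (jb.1 : ℕ)) * B) a jb.2) := by
    rw [hMdef, Matrix.fromCols_mul_fromRows, Matrix.mul_zero, zero_add,
      Matrix.sub_mul, Matrix.mul_assoc (Ot * P) T E₂, hTE, Matrix.mul_zero, sub_zero, hGE]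
  rw [FE, ← hML, Matrix.mul_assoc M L Linv, hLinv₁, Matrix.mul_one, hME]
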